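/- arXiv:2212.13551 — 2 statements merged into one kernel-verified Lean document; each statement's English description precedes it below -/
import Mathlib

section
/- For all positive integers T, t, the function g_{T,t} satisfies the (1/(C₃T))-PL condition with C₃ = 21344400/1083; that is, for every x ∈ ℝ^{Tt}, ‖∇g_{T,t}(x)‖² ≥ 2·(1083/(21344400·T))·(g_{T,t}(x) − inf g_{T,t}). -/
/-- The `k`-th coordinate (1-indexed) of `x ∈ ℝ^d`, with out-of-range coordinates
(including the convention `x_0 = 0`) equal to `0`. -/
noncomputable def coord {d : ℕ} (x : EuclideanSpace ℝ (Fin d)) (k : ℕ) : ℝ :=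
  if h : 1 ≤ k ∧ k ≤ d then x ⟨k - 1, by omega⟩ else 0

/-- The piecewise scalar component `v_y` of the hard instance. -/
noncomputable def vFun (y x : ℝ) : ℝ :=
  if x ≤ 31 / 32 * y then x ^ 2 / 2
  else if x ≤ y then x ^ 2 / 2 - 16 * (x - 31 / 32 * y) ^ 2
  else if x ≤ 33 / 32 * y then x ^ 2 / 2 - y ^ 2 / 32 + 16 * (x - 33 / 32 * y) ^ 2
  else x ^ 2 / 2 - y ^ 2 / 32

/-- The quadratic (convex) part `q_{T,t}` of the hard instance, with the convention
`x_0 = 0` (encoded by `coord x 0 = 0`). -/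
noncomputable def qFun (T t : ℕ) (x : EuclideanSpace ℝ (Fin (T * t))) : ℝ :=
  (1 / 2) * ∑ i ∈ Finset.range t,
    ((7 / 8 * coord x (i * T) - coord x (i * T + 1)) ^ 2
      + ∑ j ∈ Finset.Icc 1 (T - 1), (coord x (i * T + j + 1) - coord x (i * T + j)) ^ 2)

/-- The reference vector `y ∈ ℝ^{Tt}` with `y_{qT+b} = (7/8)^q` for `b ∈ {1, …, T}`;
in 0-based indexing, `y i = (7/8)^(i / T)`. -/
noncomputable def yVec (T t : ℕ) : EuclideanSpace ℝ (Fin (T * t)) :=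
  WithLp.toLp 2 (fun i => (7 / 8 : ℝ) ^ ((i : ℕ) / T))

/-- The hard instance `g_{T,t}(x) = q_{T,t}(x) + Σ_{i=1}^{Tt} v_{y_i}(x_i)`. -/
noncomputable def gFun (T t : ℕ) (x : EuclideanSpace ℝ (Fin (T * t))) : ℝ :=
  qFun T t x + ∑ i : Fin (T * t), vFun (yVec T t i) (x i)




noncomputable def vd (y x : ℝ) : ℝ :=
  if 31/32*y < x ∧ x < 33/32*y then (if x ≤ y then 31*(y-x) else 33*(x-y)) else x

theorem vd_eq_self {y x : ℝ} (h : ¬(31/32*y < x ∧ x < 33/32*y)) : vd y x = x := by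
  rw [vd, if_neg h]

theorem vd_nonneg {y x : ℝ} (hx : 0 ≤ x) : 0 ≤ vd y x := by
  rw [vd]; split_ifs with h1 h2 <;> [linarith [h1.1, h2]; linarith [h2]; exact hx]

theorem abs_vd_sub_le {y x : ℝ} (hy : 0 < y) : |vd y x - x| ≤ y := by
  rw [vd]; split_ifs with h1 h2
  · rw [abs_le]; constructor <;> nlinarith [h1.1, h1.2]
  · rw [abs_le]; constructor <;> nlinarith [h1.1, h1.2]
  · simp; linarith

theorem vFun_nonneg {y x : ℝ} (hy : 0 < y) : 0 ≤ vFun y x := by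
  rw [vFun]; split_ifs with h1 h2 h3
  · positivity
  · nlinarith
  · nlinarith
  · nlinarith

theorem vFun_le {y x : ℝ} (hy : 0 < y) : vFun y x ≤ x^2/2 := by
  rw [vFun]; split_ifs with h1 h2 h3
  · exact le_refl _
  · nlinarith
  · nlinarith
  · nlinarith

theorem vFun_zero {y : ℝ} (hy : 0 < y) : vFun y 0 = 0 := by
  rw [vFun, if_pos (by linarith)]; norm_num

theorem vFun_hasDerivAt {y : ℝ} (hy : 0 < y) (x : ℝ) : HasDerivAt (vFun y) (vd y x) x := by
  have e1 : ∀ z ∈ Set.Iic (31/32*y), vFun y z = z^2/2 := by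
    intro z hz; rw [vFun, if_pos (by simpa using hz)]
  have e2 : ∀ z ∈ Set.Icc (31/32*y) y, vFun y z = z^2/2 - 16*(z - 31/32*y)^2 := by
    intro z hz
    rcases eq_or_lt_of_le hz.1 with h | h
    · rw [vFun, if_pos (by linarith [h.symm.le])]; rw [← h]; ring
    · rw [vFun, if_neg (by linarith), if_pos hz.2]
  have e3 : ∀ z ∈ Set.Icc y (33/32*y), vFun y z = z^2/2 - y^2/32 + 16*(z - 33/32*y)^2 := by
    intro z hz
    rcases eq_or_lt_of_le hz.1 with h | h
    · rw [vFun, if_neg (by nlinarith [h.symm.le]), if_pos (by linarith [h.symm.le])]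
      rw [← h]; ring
    · rw [vFun, if_neg (by linarith), if_neg (by linarith), if_pos hz.2]
  have e4 : ∀ z ∈ Set.Ici (33/32*y), vFun y z = z^2/2 - y^2/32 := by
    intro z hz
    simp only [Set.mem_Ici] at hz
    rcases eq_or_lt_of_le hz with h | h
    · rw [vFun, if_neg (by nlinarith), if_neg (by nlinarith), if_pos (le_of_eq h.symm)]
      rw [← h]; try ring
    · rw [vFun, if_neg (by nlinarith), if_neg (by nlinarith), if_neg (by linarith)]
  have hp1 : ∀ z : ℝ, HasDerivAt (fun w : ℝ => w^2/2) z z := by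
    intro z
    have := (hasDerivAt_pow 2 z).div_const 2
    refine this.congr_deriv ?_; push_cast; ring
  have hp2 : ∀ z : ℝ, HasDerivAt (fun w : ℝ => w^2/2 - 16*(w - 31/32*y)^2) (31*(y-z)) z := by
    intro z
    have := (hp1 z).sub ((((hasDerivAt_id z).sub_const (31/32*y)).pow 2).const_mul 16)
    refine this.congr_deriv ?_; simp only [id_eq]; push_cast; ring
  have hp3 : ∀ z : ℝ, HasDerivAt (fun w : ℝ => w^2/2 - y^2/32 + 16*(w - 33/32*y)^2) (33*(z-y)) z := by
    intro z
    have := ((hp1 z).sub_const (y^2/32)).add ((((hasDerivAt_id z).sub_const (33/32*y)).pow 2).const_mul 16)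
    refine this.congr_deriv ?_; simp only [id_eq]; push_cast; ring
  have hp4 : ∀ z : ℝ, HasDerivAt (fun w : ℝ => w^2/2 - y^2/32) z z := fun z => (hp1 z).sub_const _
  rcases lt_trichotomy x (31/32*y) with hx | hx | hx
  · have : vd y x = x := vd_eq_self (by intro h; linarith [h.1])
    rw [this]
    exact (hp1 x).congr_of_eventuallyEq
      (Filter.eventually_of_mem (Iio_mem_nhds hx) (fun z hz => e1 z (Set.mem_Iic.mpr (le_of_lt (Set.mem_Iio.mp hz)))))
  · -- x = 31/32 y junction
    have hvd : vd y x = x := vd_eq_self (by intro h; linarith [h.1])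
    rw [hvd]
    have h1 : HasDerivWithinAt (vFun y) x (Set.Iic (31/32*y)) x :=
      ((hp1 x).hasDerivWithinAt).congr e1 (e1 x (Set.mem_Iic.mpr (le_of_eq hx)))
    have h2 : HasDerivWithinAt (vFun y) x (Set.Icc (31/32*y) y) x := by
      have := ((hp2 x).hasDerivWithinAt).congr e2 (e2 x (Set.mem_Icc.mpr ⟨le_of_eq hx.symm, by linarith⟩))
      refine this.congr_deriv ?_; rw [hx]; ring
    have hu := h1.union h2
    rw [Set.Iic_union_Icc_eq_Iic (by linarith)] at hu
    exact hu.hasDerivAt (Iic_mem_nhds (by linarith))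
  rcases lt_trichotomy x y with hx2 | hx2 | hx2
  · have hvd : vd y x = 31*(y-x) := by
      rw [vd, if_pos ⟨hx, by linarith⟩, if_pos (le_of_lt hx2)]
    rw [hvd]
    exact (hp2 x).congr_of_eventuallyEq
      (Filter.eventually_of_mem (Ioo_mem_nhds hx hx2)
        (fun z hz => e2 z (Set.mem_Icc.mpr ⟨le_of_lt (Set.mem_Ioo.mp hz).1, le_of_lt (Set.mem_Ioo.mp hz).2⟩)))
  · -- x = y junction
    have hvd : vd y x = 0 := by
      rw [vd, if_pos ⟨hx, by rw [hx2]; linarith⟩, if_pos (le_of_eq hx2), hx2]; ring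
    rw [hvd]
    have h1 : HasDerivWithinAt (vFun y) 0 (Set.Icc (31/32*y) y) x := by
      have := ((hp2 x).hasDerivWithinAt).congr e2 (e2 x (Set.mem_Icc.mpr ⟨le_of_lt hx, le_of_eq hx2⟩))
      refine this.congr_deriv ?_; rw [hx2]; ring
    have h2 : HasDerivWithinAt (vFun y) 0 (Set.Icc y (33/32*y)) x := by
      have := ((hp3 x).hasDerivWithinAt).congr e3 (e3 x (Set.mem_Icc.mpr ⟨le_of_eq hx2.symm, by linarith⟩))
      refine this.congr_deriv ?_; rw [hx2]; ring
    have hu := h1.union h2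
    rw [Set.Icc_union_Icc_eq_Icc (by linarith) (by linarith)] at hu
    exact hu.hasDerivAt (Icc_mem_nhds hx (by rw [hx2]; linarith))
  rcases lt_trichotomy x (33/32*y) with hx3 | hx3 | hx3
  · have hvd : vd y x = 33*(x-y) := by
      rw [vd, if_pos ⟨hx, hx3⟩, if_neg (by linarith)]
    rw [hvd]
    exact (hp3 x).congr_of_eventuallyEq
      (Filter.eventually_of_mem (Ioo_mem_nhds hx2 hx3)
        (fun z hz => e3 z (Set.mem_Icc.mpr ⟨le_of_lt (Set.mem_Ioo.mp hz).1, le_of_lt (Set.mem_Ioo.mp hz).2⟩)))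
  · -- x = 33/32 y junction
    have hvd : vd y x = x := vd_eq_self (by intro h; linarith [h.2])
    rw [hvd]
    have h1 : HasDerivWithinAt (vFun y) x (Set.Icc y (33/32*y)) x := by
      have := ((hp3 x).hasDerivWithinAt).congr e3 (e3 x (Set.mem_Icc.mpr ⟨le_of_lt hx2, le_of_eq hx3⟩))
      refine this.congr_deriv ?_; rw [hx3]; ring
    have h2 : HasDerivWithinAt (vFun y) x (Set.Ici (33/32*y)) x :=
      ((hp4 x).hasDerivWithinAt).congr e4 (e4 x (Set.mem_Ici.mpr (le_of_eq hx3.symm)))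
    have hu := h1.union h2
    rw [Set.Icc_union_Ici_eq_Ici (by linarith)] at hu
    exact hu.hasDerivAt (Ici_mem_nhds hx2)
  · have hvd : vd y x = x := vd_eq_self (by intro h; linarith [h.2])
    rw [hvd]
    exact (hp4 x).congr_of_eventuallyEq
      (Filter.eventually_of_mem (Ioi_mem_nhds hx3) (fun z hz => e4 z (Set.mem_Ici.mpr (le_of_lt (Set.mem_Ioi.mp hz)))))




noncomputable def cc (T k : ℕ) : ℝ := if T ∣ (k-1) then 7/8 else 1
noncomputable def yy (T k : ℕ) : ℝ := (7/8)^((k-1)/T)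
noncomputable def dd (T t : ℕ) (x : EuclideanSpace ℝ (Fin (T*t))) (k : ℕ) : ℝ :=
  if k ≤ T*t then coord x k - cc T k * coord x (k-1) else 0

theorem coord_zero {d : ℕ} (x : EuclideanSpace ℝ (Fin d)) : coord x 0 = 0 := by
  rw [coord, dif_neg]; omega

theorem coord_succ {d : ℕ} (x : EuclideanSpace ℝ (Fin d)) (i : Fin d) :
    coord x ((i:ℕ)+1) = x i := by
  rw [coord, dif_pos ⟨by omega, by omega⟩]
  rfl

theorem cc_pos {T k : ℕ} : 0 < cc T k := by
  rw [cc]; split_ifs <;> norm_num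

theorem cc_le_one {T k : ℕ} : cc T k ≤ 1 := by
  rw [cc]; split_ifs <;> norm_num

theorem cc_ge {T k : ℕ} : 7/8 ≤ cc T k := by
  rw [cc]; split_ifs <;> norm_num

theorem yy_pos {T k : ℕ} : 0 < yy T k := by rw [yy]; positivity

theorem yy_le_one {T k : ℕ} : yy T k ≤ 1 :=
  pow_le_one₀ (by norm_num) (by norm_num)

theorem yy_mono {T j k : ℕ} (h : j ≤ k) : yy T k ≤ yy T j := by
  rw [yy, yy]
  exact pow_le_pow_of_le_one (by norm_num) (by norm_num) (Nat.div_le_div_right (by omega))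

theorem sum_Icc_one (n : ℕ) (f : ℕ → ℝ) :
    ∑ k ∈ Finset.Icc 1 n, f k = ∑ i ∈ Finset.range n, f (i+1) := by
  rw [← Finset.Ico_add_one_right_eq_Icc, Finset.sum_Ico_eq_sum_range]
  simp [add_comm]

theorem abel_lemma (T t : ℕ) (x : EuclideanSpace ℝ (Fin (T*t))) (V : ℕ → ℝ) (hV0 : V 0 = 0) :
    ∑ k ∈ Finset.Icc 1 (T*t), dd T t x k * (V k - cc T k * V (k-1))
      = ∑ k ∈ Finset.Icc 1 (T*t), (dd T t x k - cc T (k+1) * dd T t x (k+1)) * V k := by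
  have key : ∀ k : ℕ, 1 ≤ k →
      dd T t x k * (V k - cc T k * V (k-1)) - (dd T t x k - cc T (k+1) * dd T t x (k+1)) * V k
      = (fun j => cc T (j+1) * dd T t x (j+1) * V j) k
        - (fun j => cc T (j+1) * dd T t x (j+1) * V j) (k-1) := by
    intro k hk
    obtain ⟨i, rfl⟩ : ∃ i, k = i + 1 := ⟨k - 1, by omega⟩
    simp only [Nat.add_sub_cancel]
    ring
  rw [← sub_eq_zero, ← Finset.sum_sub_distrib]
  rw [Finset.sum_congr rfl (fun k hk => key k (Finset.mem_Icc.mp hk).1)]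
  rw [sum_Icc_one]
  simp only [Nat.add_sub_cancel]
  rw [Finset.sum_range_sub (fun j => cc T (j+1) * dd T t x (j+1) * V j)]
  have h1 : dd T t x (T*t+1) = 0 := by rw [dd, if_neg (by omega)]
  rw [hV0, h1]
  ring

theorem block_sum {T : ℕ} (hT : 0 < T) (N : ℕ) (f : ℕ → ℝ) :
    ∑ k ∈ Finset.range (T*N), f k
      = ∑ p ∈ Finset.range N ×ˢ Finset.range T, f (p.1*T + p.2) := by
  refine Finset.sum_nbij' (i := fun k => (k/T, k%T)) (j := fun p => p.1*T + p.2)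
    ?_ ?_ ?_ ?_ ?_
  · intro a ha
    simp only [Finset.mem_range, Finset.mem_product] at *
    constructor
    · exact Nat.div_lt_of_lt_mul (by omega)
    · exact Nat.mod_lt _ hT
  · intro p hp
    simp only [Finset.mem_range, Finset.mem_product] at *
    calc p.1*T + p.2 < p.1*T + T := by omega
    _ = (p.1+1)*T := by ring
    _ ≤ N*T := Nat.mul_le_mul_right _ (by omega)
    _ = T*N := by ring
  · intro a ha
    simp only []
    rw [mul_comm]
    exact Nat.div_add_mod a T
  · intro p hp
    simp only [Finset.mem_range, Finset.mem_product] at hp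
    have h1 : (p.1*T + p.2)/T = p.1 := by
      rw [mul_comm, Nat.mul_add_div hT]
      simp [Nat.div_eq_of_lt hp.2]
    have h2 : (p.1*T + p.2)%T = p.2 := by
      rw [mul_comm, Nat.mul_add_mod]
      exact Nat.mod_eq_of_lt hp.2
    simp [h1, h2]
  · intro a ha
    congr 1
    rw [mul_comm]
    exact (Nat.div_add_mod a T).symm




theorem qFun_eq (T t : ℕ) (hT : 0 < T) (x : EuclideanSpace ℝ (Fin (T*t))) :
    qFun T t x = (1/2) * ∑ k ∈ Finset.Icc 1 (T*t), (dd T t x k)^2 := by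
  rw [qFun]
  congr 1
  rw [sum_Icc_one, block_sum hT, Finset.sum_product]
  apply Finset.sum_congr rfl
  intro q hq
  rw [Finset.mem_range] at hq
  have hb : ∀ r, r < T → q*T + r + 1 ≤ T*t := by
    intro r hr
    calc q*T + r + 1 ≤ q*T + T := by omega
      _ = (q+1)*T := by ring
      _ ≤ t*T := Nat.mul_le_mul_right _ (by omega)
      _ = T*t := Nat.mul_comm _ _
  obtain ⟨S, rfl⟩ : ∃ S, T = S + 1 := ⟨T-1, by omega⟩
  rw [Finset.sum_range_succ' (fun r => (dd (S+1) t x (q*(S+1)+r+1))^2) S]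
  have hfirst : (dd (S+1) t x (q*(S+1)+0+1))^2
      = (7/8 * coord x (q*(S+1)) - coord x (q*(S+1)+1))^2 := by
    have h1 : dd (S+1) t x (q*(S+1)+0+1)
        = -(7/8 * coord x (q*(S+1)) - coord x (q*(S+1)+1)) := by
      rw [dd, if_pos (hb 0 (by omega))]
      have hd : (S+1) ∣ (q*(S+1)+0+1-1) := by simpa using Dvd.intro q rfl
      rw [cc, if_pos hd]
      simp only [Nat.add_sub_cancel]
      ring_nf
    rw [h1, neg_sq]
  have hinner : ∑ i ∈ Finset.range S, (dd (S+1) t x (q*(S+1)+(i+1)+1))^2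
      = ∑ j ∈ Finset.Icc 1 (S+1-1), (coord x (q*(S+1)+j+1) - coord x (q*(S+1)+j))^2 := by
    rw [show (S+1) - 1 = S from rfl, sum_Icc_one]
    apply Finset.sum_congr rfl
    intro i hi
    rw [Finset.mem_range] at hi
    have h1 : dd (S+1) t x (q*(S+1)+(i+1)+1)
        = coord x (q*(S+1)+(i+1)+1) - coord x (q*(S+1)+(i+1)) := by
      rw [dd, if_pos (hb (i+1) (by omega))]
      have hnd : ¬ (S+1) ∣ (q*(S+1)+(i+1)+1-1) := by
        intro hdvd
        have heq : q*(S+1)+(i+1)+1-1 = (S+1)*q + (i+1) := by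
          rw [Nat.mul_comm]; omega
        rw [heq] at hdvd
        have h2 : (S+1) ∣ (i+1) := (Nat.dvd_add_right ⟨q, rfl⟩).mp hdvd
        have := Nat.le_of_dvd (by omega) h2
        omega
      rw [cc, if_neg hnd]
      simp only [Nat.add_sub_cancel]
      ring_nf
    rw [h1]
  rw [hfirst, hinner]
  ring

theorem vsum_eq (T t : ℕ) (x : EuclideanSpace ℝ (Fin (T*t))) :
    ∑ i : Fin (T*t), vFun (yVec T t i) (x i)
      = ∑ k ∈ Finset.Icc 1 (T*t), vFun (yy T k) (coord x k) := by
  rw [sum_Icc_one]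
  rw [← Fin.sum_univ_eq_sum_range (fun i => vFun (yy T (i+1)) (coord x (i+1))) (T*t)]
  apply Finset.sum_congr rfl
  intro i _
  have h1 : yVec T t i = yy T ((i:ℕ)+1) := by
    show (7/8:ℝ)^((i:ℕ)/T) = yy T ((i:ℕ)+1)
    rw [yy]
    norm_num
  have h2 : coord x ((i:ℕ)+1) = x i := coord_succ x i
  rw [← h1, ← h2]



noncomputable def pp (T t : ℕ) (x : EuclideanSpace ℝ (Fin (T*t))) (k : ℕ) : ℝ :=
  vd (yy T k) (coord x k)

noncomputable def uu (T t : ℕ) (x : EuclideanSpace ℝ (Fin (T*t))) (k : ℕ) : ℝ :=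
  dd T t x k - cc T (k+1) * dd T t x (k+1) + pp T t x k

noncomputable def cproj (T t : ℕ) (k : ℕ) : EuclideanSpace ℝ (Fin (T*t)) →L[ℝ] ℝ :=
  if h : 1 ≤ k ∧ k ≤ T*t then EuclideanSpace.proj (⟨k-1, by omega⟩ : Fin (T*t)) else 0

theorem coord_cproj (T t : ℕ) (x : EuclideanSpace ℝ (Fin (T*t))) (k : ℕ) :
    coord x k = cproj T t k x := by
  rw [coord, cproj]
  split_ifs with h
  · rfl
  · rfl

theorem gFun_seq (T t : ℕ) (hT : 0 < T) (x : EuclideanSpace ℝ (Fin (T*t))) :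
    gFun T t x = (1/2) * ∑ k ∈ Finset.Icc 1 (T*t), (dd T t x k)^2
      + ∑ k ∈ Finset.Icc 1 (T*t), vFun (yy T k) (coord x k) := by
  rw [gFun, qFun_eq T t hT, vsum_eq]

noncomputable def UU (T t : ℕ) (x : EuclideanSpace ℝ (Fin (T*t))) :
    EuclideanSpace ℝ (Fin (T*t)) :=
  WithLp.toLp 2 (fun i => uu T t x ((i:ℕ)+1))

theorem gFun_hasGradient (T t : ℕ) (hT : 0 < T) (x : EuclideanSpace ℝ (Fin (T*t))) :
    HasGradientAt (gFun T t) (UU T t x) x := by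
  classical
  -- the candidate fderiv
  set φ : ℕ → (EuclideanSpace ℝ (Fin (T*t)) →L[ℝ] ℝ) :=
    fun k => cproj T t k - cc T k • cproj T t (k-1) with hφ
  have hddφ : ∀ z, ∀ k ∈ Finset.Icc 1 (T*t), dd T t z k = φ k z := by
    intro z k hk
    rw [Finset.mem_Icc] at hk
    rw [dd, if_pos hk.2, hφ]
    simp only [ContinuousLinearMap.coe_sub', Pi.sub_apply, ContinuousLinearMap.coe_smul',
      Pi.smul_apply, smul_eq_mul]
    rw [coord_cproj T t z k, coord_cproj T t z (k-1)]
  have h1 : ∀ k ∈ Finset.Icc 1 (T*t), HasFDerivAt (fun z => (dd T t z k)^2)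
      ((2 * dd T t x k) • φ k) x := by
    intro k hk
    have hc := (hasDerivAt_pow 2 (φ k x)).comp_hasFDerivAt x (φ k).hasFDerivAt
    have he : (fun z => (dd T t z k)^2) = (fun z => (φ k z)^2) := by
      funext z; rw [hddφ z k hk]
    rw [he, hddφ x k hk]
    refine hc.congr_fderiv ?_
    push_cast
    rw [pow_one]
  have h2 : ∀ k ∈ Finset.Icc 1 (T*t), HasFDerivAt (fun z => vFun (yy T k) (coord z k))
      (pp T t x k • cproj T t k) x := by
    intro k hk
    have hc := (vFun_hasDerivAt (yy_pos (T := T) (k := k)) (cproj T t k x)).comp_hasFDerivAt x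
      (cproj T t k).hasFDerivAt
    have he : (fun z => vFun (yy T k) (coord z k)) = (fun z => vFun (yy T k) (cproj T t k z)) := by
      funext z; rw [coord_cproj]
    rw [he, pp, coord_cproj]
    exact hc
  have hsum1 : HasFDerivAt (fun z => (1/2:ℝ) * ∑ k ∈ Finset.Icc 1 (T*t), (dd T t z k)^2)
      ((1/2:ℝ) • ∑ k ∈ Finset.Icc 1 (T*t), (2 * dd T t x k) • φ k) x := by
    exact (HasFDerivAt.fun_sum h1).const_mul (1/2:ℝ)
  have hsum2 : HasFDerivAt (fun z => ∑ k ∈ Finset.Icc 1 (T*t), vFun (yy T k) (coord z k))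
      (∑ k ∈ Finset.Icc 1 (T*t), pp T t x k • cproj T t k) x := HasFDerivAt.fun_sum h2
  have hg : HasFDerivAt (gFun T t)
      ((1/2:ℝ) • ∑ k ∈ Finset.Icc 1 (T*t), (2 * dd T t x k) • φ k
        + ∑ k ∈ Finset.Icc 1 (T*t), pp T t x k • cproj T t k) x := by
    have he : gFun T t = fun z => (1/2) * ∑ k ∈ Finset.Icc 1 (T*t), (dd T t z k)^2
        + ∑ k ∈ Finset.Icc 1 (T*t), vFun (yy T k) (coord z k) := by
      funext z; exact gFun_seq T t hT z
    rw [he]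
    exact hsum1.add hsum2
  rw [hasGradientAt_iff_hasFDerivAt]
  have heq : (InnerProductSpace.toDual ℝ (EuclideanSpace ℝ (Fin (T*t)))) (UU T t x)
      = (1/2:ℝ) • ∑ k ∈ Finset.Icc 1 (T*t), (2 * dd T t x k) • φ k
        + ∑ k ∈ Finset.Icc 1 (T*t), pp T t x k • cproj T t k := by
    apply ContinuousLinearMap.ext
    intro v
    rw [InnerProductSpace.toDual_apply_apply]
    rw [PiLp.inner_apply]
    simp only [RCLike.inner_apply, conj_trivial]
    -- LHS : ∑ i : Fin n, UU i * v i
    have hL : ∑ i : Fin (T*t), (UU T t x i) * v i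
        = ∑ k ∈ Finset.Icc 1 (T*t), uu T t x k * coord v k := by
      rw [sum_Icc_one]
      rw [← Fin.sum_univ_eq_sum_range (fun i => uu T t x (i+1) * coord v (i+1)) (T*t)]
      apply Finset.sum_congr rfl
      intro i _
      rw [coord_succ]
      rfl
    rw [Finset.sum_congr rfl (fun i _ => mul_comm (v i) (UU T t x i)), hL]
    -- RHS
    simp only [ContinuousLinearMap.add_apply, ContinuousLinearMap.coe_smul', Pi.smul_apply,
      ContinuousLinearMap.sum_apply, ContinuousLinearMap.coe_sub', Pi.sub_apply,
      ContinuousLinearMap.coe_smul, smul_eq_mul]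
    have hR1 : ∀ k ∈ Finset.Icc 1 (T*t), (2 * dd T t x k) * (φ k v)
        = 2 * (dd T t x k * (coord v k - cc T k * coord v (k-1))) := by
      intro k hk
      rw [hφ]
      simp only [ContinuousLinearMap.coe_sub', Pi.sub_apply, ContinuousLinearMap.coe_smul',
        Pi.smul_apply, smul_eq_mul]
      rw [coord_cproj T t v k, coord_cproj T t v (k-1)]
      ring
    rw [Finset.sum_congr rfl hR1]
    have habel := abel_lemma T t x (coord v) (coord_zero v)
    have hR2 : ∀ k ∈ Finset.Icc 1 (T*t), pp T t x k * (cproj T t k v) = pp T t x k * coord v k := by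
      intro k hk
      rw [coord_cproj]
    rw [Finset.sum_congr rfl hR2]
    rw [← Finset.mul_sum, habel]
    have h12 : (1/2:ℝ) * (2 * (∑ k ∈ Finset.Icc 1 (T*t),
        (dd T t x k - cc T (k+1) * dd T t x (k+1)) * coord v k))
        = ∑ k ∈ Finset.Icc 1 (T*t), (dd T t x k - cc T (k+1) * dd T t x (k+1)) * coord v k := by
      ring
    rw [h12, ← Finset.sum_add_distrib]
    apply Finset.sum_congr rfl
    intro k hk
    rw [uu]
    ring
  rw [heq]
  exact hg

theorem coord_zero_vec {d : ℕ} (k : ℕ) : coord (0 : EuclideanSpace ℝ (Fin d)) k = 0 := by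
  rw [coord]
  split_ifs with h
  · rfl
  · rfl

theorem grad_norm_sq (T t : ℕ) (hT : 0 < T) (x : EuclideanSpace ℝ (Fin (T*t))) :
    ‖gradient (gFun T t) x‖^2 = ∑ k ∈ Finset.Icc 1 (T*t), (uu T t x k)^2 := by
  rw [(gFun_hasGradient T t hT x).gradient]
  rw [EuclideanSpace.norm_eq]
  rw [Real.sq_sqrt (by positivity)]
  rw [sum_Icc_one]
  rw [← Fin.sum_univ_eq_sum_range (fun i => (uu T t x (i+1))^2) (T*t)]
  apply Finset.sum_congr rfl
  intro i _
  rw [Real.norm_eq_abs, sq_abs]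
  rfl

theorem gFun_nonneg (T t : ℕ) (hT : 0 < T) (z : EuclideanSpace ℝ (Fin (T*t))) :
    0 ≤ gFun T t z := by
  rw [gFun_seq T t hT z]
  have h1 : 0 ≤ ∑ k ∈ Finset.Icc 1 (T*t), (dd T t z k)^2 :=
    Finset.sum_nonneg (fun k _ => sq_nonneg _)
  have h2 : 0 ≤ ∑ k ∈ Finset.Icc 1 (T*t), vFun (yy T k) (coord z k) :=
    Finset.sum_nonneg (fun k _ => vFun_nonneg yy_pos)
  linarith

theorem gFun_zero (T t : ℕ) (hT : 0 < T) : gFun T t 0 = 0 := by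
  rw [gFun_seq T t hT 0]
  have h1 : ∀ k ∈ Finset.Icc 1 (T*t), (dd T t (0 : EuclideanSpace ℝ (Fin (T*t))) k)^2 = 0 := by
    intro k _
    rw [dd]
    split_ifs
    · rw [coord_zero_vec, coord_zero_vec]; ring_nf
    · ring_nf
  have h2 : ∀ k ∈ Finset.Icc 1 (T*t), vFun (yy T k) (coord (0 : EuclideanSpace ℝ (Fin (T*t))) k) = 0 := by
    intro k _
    rw [coord_zero_vec]
    exact vFun_zero yy_pos
  rw [Finset.sum_congr rfl h1, Finset.sum_congr rfl h2]
  simp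

theorem gFun_inf (T t : ℕ) (hT : 0 < T) :
    (⨅ z : EuclideanSpace ℝ (Fin (T*t)), gFun T t z) = 0 := by
  apply le_antisymm
  · have := ciInf_le (f := gFun T t) ⟨0, by rintro a ⟨z, rfl⟩; exact gFun_nonneg T t hT z⟩ 0
    rw [gFun_zero T t hT] at this
    exact this
  · exact le_ciInf (fun z => gFun_nonneg T t hT z)

set_option maxHeartbeats 1000000 in
theorem bound1 (T t : ℕ) (hT : 0 < T) (ht : 0 < t) (x : EuclideanSpace ℝ (Fin (T*t)))
    (m : ℕ) (hm1 : 1 ≤ m) (hmn : m ≤ T*t)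
    (htrap : 31/32 * yy T m < coord x m ∧ coord x m < 33/32 * yy T m)
    (hmin : ∀ j, 1 ≤ j → j < m →
      ¬(31/32 * yy T j < coord x j ∧ coord x j < 33/32 * yy T j))
    (hu : ∀ k, 1 ≤ k → k ≤ T*t → |uu T t x k| ≤ yy T m / 40) : False := by
  have hympos : 0 < yy T m := yy_pos
  have f1 : ∀ k, k ≤ (T*t) → dd T t x k = coord x k - cc T k * coord x (k-1) := by
    intro k hk; rw [dd, if_pos hk]
  have f2 : dd T t x ((T*t)+1) = 0 := by rw [dd, if_neg (by omega)]
  have f3 : ∀ k, 1 ≤ k → k < m → pp T t x k = coord x k := by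
    intro k h1 h2; rw [pp, vd_eq_self (hmin k h1 h2)]
  have fyle : ∀ k, m ≤ k → yy T k ≤ (yy T m) := fun k h => yy_mono h
  have huu : ∀ k, 1 ≤ k → k ≤ (T*t) → uu T t x k
      = dd T t x k - cc T (k+1) * dd T t x (k+1) + pp T t x k := by
    intro k _ _; rw [uu]
  rcases le_or_gt ((yy T m)/4) (dd T t x m) with hd | hd
  · -- CASE R : dd m ≥ (yy T m)/4
    have hppm : 0 ≤ pp T t x m := vd_nonneg (by nlinarith [htrap.1])
    rcases eq_or_lt_of_le hmn with hmn' | hmn'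
    · -- m = (T*t)
      have h := hu m hm1 hmn
      rw [abs_le] at h
      have heq := huu m hm1 hmn
      have hz : dd T t x (m+1) = 0 := by rw [hmn']; exact f2
      rw [hz] at heq
      nlinarith [h.2, hd, hppm, heq]
    · -- m < (T*t)
      have hum := hu m hm1 hmn
      rw [abs_le] at hum
      have he : cc T (m+1) * dd T t x (m+1) = dd T t x m + pp T t x m - uu T t x m := by
        rw [huu m hm1 hmn]; ring
      have hccd : 9/40*(yy T m) ≤ cc T (m+1) * dd T t x (m+1) := by
        rw [he]; nlinarith [hum.2, hd, hppm]
      have hdd1 : 9/40*(yy T m) ≤ dd T t x (m+1) := by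
        nlinarith [cc_le_one (T := T) (k := m+1), cc_pos (T := T) (k := m+1), hccd, hympos]
      have hX1 : 21/20*(yy T m) ≤ coord x (m+1) := by
        have := f1 (m+1) (by omega)
        have h0 : coord x (m+1) = cc T (m+1) * coord x m + dd T t x (m+1) := by
          rw [this]; simp
        rw [h0]
        nlinarith [cc_ge (T := T) (k := m+1), cc_le_one (T := T) (k := m+1), htrap.1, hdd1, hympos]
      have inv : ∀ k, m+1 ≤ k → (k ≤ (T*t) → 21/20*(yy T m) ≤ coord x k ∧ 1/5*(yy T m) ≤ dd T t x k) := by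
        intro k hk
        induction k, hk using Nat.le_induction with
        | base => intro _; exact ⟨hX1, by linarith [hdd1]⟩
        | succ k hk IH =>
          intro hk1
          obtain ⟨hXk, hdk⟩ := IH (by omega)
          have hyk : yy T k ≤ (yy T m) := fyle k (by omega)
          have hppk : pp T t x k = coord x k := by
            rw [pp, vd_eq_self]
            intro hh
            nlinarith [hh.2, hyk, hympos, hXk]
          have huk := hu k (by omega) (by omega)
          rw [abs_le] at huk
          have he : cc T (k+1) * dd T t x (k+1) = dd T t x k + pp T t x k - uu T t x k := by
            rw [huu k (by omega) (by omega)]; ring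
          have hccd : 49/40*(yy T m) ≤ cc T (k+1) * dd T t x (k+1) := by
            rw [he, hppk]; nlinarith [huk.2, hdk, hXk]
          have hdd1 : 49/40*(yy T m) ≤ dd T t x (k+1) := by
            nlinarith [cc_le_one (T := T) (k := k+1), cc_pos (T := T) (k := k+1), hccd, hympos]
          have h0 : coord x (k+1) = cc T (k+1) * coord x k + dd T t x (k+1) := by
            rw [f1 (k+1) (by omega)]; simp
          constructor
          · rw [h0]
            nlinarith [cc_ge (T := T) (k := k+1), hXk, hdd1, hympos]
          · linarith [hdd1]
      obtain ⟨hXn, hdn⟩ := inv (T*t) (by omega) (le_refl (T*t))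
      have hppn : pp T t x (T*t) = coord x (T*t) := by
        rw [pp, vd_eq_self]
        intro hh
        have hyk : yy T (T*t) ≤ (yy T m) := fyle (T*t) (by omega)
        nlinarith [hh.2, hyk, hympos, hXn]
      have hun := hu (T*t) (by omega) (le_refl (T*t))
      rw [abs_le] at hun
      have := huu (T*t) (by omega) (le_refl (T*t))
      rw [f2, hppn] at this
      nlinarith [this, hun.2, hXn, hdn, hympos]
  · -- CASE L : dd m < (yy T m)/4
    have hd1 : dd T t x 1 = coord x 1 := by
      rw [f1 1 (by nlinarith [Nat.one_le_iff_ne_zero.mpr (by positivity : T*t ≠ 0)] : 1 ≤ (T*t))]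
      rw [coord_zero]
      ring
    rcases eq_or_lt_of_le hm1 with hm1' | hm1'
    · -- m = 1
      rw [← hm1'] at hd
      rw [hd1] at hd
      rw [← hm1'] at htrap
      nlinarith [htrap.1, hympos, hd]
    · -- m ≥ 2
      have hbaseX : 23/32*(yy T m) ≤ coord x (m-1) := by
        have he := f1 m hmn
        have h0 : cc T m * coord x (m-1) = coord x m - dd T t x m := by rw [he]; ring
        nlinarith [cc_le_one (T := T) (k := m), cc_pos (T := T) (k := m), htrap.1, hd, hympos, h0]
      have hbased : dd T t x (m-1) ≤ 0 := by
        have hum1 := hu (m-1) (by omega) (by omega)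
        rw [abs_le] at hum1
        have he : dd T t x (m-1) = cc T m * dd T t x m + uu T t x (m-1) - pp T t x (m-1) := by
          have := huu (m-1) (by omega) (by omega)
          have hm1e : m - 1 + 1 = m := by omega
          rw [hm1e] at this
          rw [this]; ring
        rw [he, f3 (m-1) (by omega) (by omega)]
        rcases le_or_gt 0 (dd T t x m) with hs | hs
        · nlinarith [cc_le_one (T := T) (k := m), cc_pos (T := T) (k := m), hd, hum1.2, hbaseX, hympos, hs]
        · nlinarith [cc_le_one (T := T) (k := m), cc_pos (T := T) (k := m), hd, hum1.2, hbaseX, hympos, hs]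
      have inv : ∀ i, i ≤ m-2 → (7/10*(yy T m) ≤ coord x (m-1-i) ∧ dd T t x (m-1-i) ≤ 0) := by
        intro i
        induction i with
        | zero => intro _; simpa using ⟨by linarith [hbaseX], hbased⟩
        | succ i IH =>
          intro hi
          obtain ⟨hXj, hdj⟩ := IH (by omega)
          set j := m-1-i with hj
          have hj2 : 2 ≤ j := by omega
          have hjm : j ≤ m-1 := by omega
          have hji : m-1-(i+1) = j-1 := by omega
          rw [hji]
          have hXj1 : 7/10*(yy T m) ≤ coord x (j-1) := by
            have he := f1 j (by omega)
            have h0 : cc T j * coord x (j-1) = coord x j - dd T t x j := by rw [he]; ring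
            nlinarith [cc_le_one (T := T) (k := j), cc_pos (T := T) (k := j), hXj, hdj, hympos, h0]
          constructor
          · exact hXj1
          · have huj1 := hu (j-1) (by omega) (by omega)
            rw [abs_le] at huj1
            have he : dd T t x (j-1) = cc T j * dd T t x j + uu T t x (j-1) - pp T t x (j-1) := by
              have := huu (j-1) (by omega) (by omega)
              have hje : j - 1 + 1 = j := by omega
              rw [hje] at this
              rw [this]; ring
            rw [he, f3 (j-1) (by omega) (by omega)]
            nlinarith [mul_nonpos_of_nonneg_of_nonpos (cc_pos (T := T) (k := j)).le hdj,
              huj1.2, hXj1, hympos]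
      obtain ⟨hX1, hdd1⟩ := inv (m-2) (le_refl _)
      have h1e : m-1-(m-2) = 1 := by omega
      rw [h1e] at hX1 hdd1
      rw [hd1] at hdd1
      nlinarith [hX1, hdd1, hympos]

noncomputable def gFun' (T t : ℕ) (x : EuclideanSpace ℝ (Fin (T*t))) : ℝ :=
  (1/2) * ∑ k ∈ Finset.Icc 1 (T*t), (dd T t x k)^2
    + ∑ k ∈ Finset.Icc 1 (T*t), vFun (yy T k) (coord x k)

theorem yy_sq (T k : ℕ) : (yy T k)^2 = (49/64 : ℝ)^((k-1)/T) := by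
  rw [yy, ← pow_mul, mul_comm, pow_mul]
  norm_num

theorem geom_le64 (t : ℕ) : ∑ q ∈ Finset.range t, (49/64 : ℝ)^q ≤ 64/15 := by
  rw [geom_sum_eq (by norm_num)]
  rw [div_le_iff_of_neg (by norm_num)]
  nlinarith [pow_nonneg (by norm_num : (0:ℝ) ≤ 49/64) t]

theorem Ybound (T t : ℕ) (hT : 0 < T) (ht : 0 < t) (x : EuclideanSpace ℝ (Fin (T*t)))
    (m : ℕ) (hm1 : 1 ≤ m) (hmn : m ≤ T*t)
    (hmin : ∀ j, 1 ≤ j → j < m →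
      ¬(31/32 * yy T j < coord x j ∧ coord x j < 33/32 * yy T j)) :
    ∑ k ∈ Finset.Icc 1 (T*t), (pp T t x k - coord x k)^2 ≤ (64/15) * T * (yy T m)^2 := by
  have step1 : ∑ k ∈ Finset.Icc 1 (T*t), (pp T t x k - coord x k)^2
      ≤ ∑ k ∈ Finset.Icc 1 (T*t), (if m ≤ k then (yy T k)^2 else 0) := by
    apply Finset.sum_le_sum
    intro k hk
    rw [Finset.mem_Icc] at hk
    by_cases hkm : m ≤ k
    · rw [if_pos hkm]
      have h1 := abs_vd_sub_le (y := yy T k) (x := coord x k) yy_pos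
      have h2 : (pp T t x k - coord x k)^2 = |vd (yy T k) (coord x k) - coord x k|^2 := by
        rw [sq_abs, pp]
      rw [h2]
      exact pow_le_pow_left₀ (abs_nonneg _) h1 2
    · rw [if_neg hkm]
      have h3 : pp T t x k = coord x k := by
        rw [pp, vd_eq_self (hmin k hk.1 (by omega))]
      rw [h3]
      simp
  have step2 : ∑ k ∈ Finset.Icc 1 (T*t), (if m ≤ k then (yy T k)^2 else 0)
      = ∑ k ∈ Finset.Icc m (T*t), (yy T k)^2 := by
    rw [← Finset.sum_filter]
    congr 1
    apply Finset.ext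
    intro k
    simp only [Finset.mem_filter, Finset.mem_Icc]
    omega
  have step3 : ∑ k ∈ Finset.Icc m (T*t), (yy T k)^2
      ≤ (yy T m)^2 * ∑ k ∈ Finset.Icc m (T*t), (49/64:ℝ)^((k-m)/T) := by
    rw [Finset.mul_sum]
    apply Finset.sum_le_sum
    intro k hk
    rw [Finset.mem_Icc] at hk
    rw [yy_sq, yy_sq]
    rw [← pow_add]
    apply pow_le_pow_of_le_one (by norm_num) (by norm_num)
    rw [Nat.le_div_iff_mul_le hT, add_mul]
    have h1 := Nat.div_mul_le_self (m-1) T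
    have h2 := Nat.div_mul_le_self (k-m) T
    omega
  have step4 : ∑ k ∈ Finset.Icc m (T*t), (49/64:ℝ)^((k-m)/T) ≤ (64/15) * T := by
    rw [← Finset.Ico_add_one_right_eq_Icc, Finset.sum_Ico_eq_sum_range]
    have he : ∀ i, (49/64:ℝ)^((m+i-m)/T) = (49/64:ℝ)^(i/T) := by
      intro i
      have h0 : m+i-m = i := by omega
      rw [h0]
    rw [Finset.sum_congr rfl (fun i _ => he i)]
    have hsub : ∑ i ∈ Finset.range (T*t+1-m), (49/64:ℝ)^(i/T)
        ≤ ∑ i ∈ Finset.range (T*t), (49/64:ℝ)^(i/T) := by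
      apply Finset.sum_le_sum_of_subset_of_nonneg
      · apply Finset.range_subset_range.mpr; omega
      · intro i _ _; positivity
    refine le_trans hsub ?_
    rw [block_sum hT t]
    rw [Finset.sum_product]
    have hin : ∀ q ∈ Finset.range t, ∑ r ∈ Finset.range T, (49/64:ℝ)^((q*T+r)/T)
        = T * (49/64:ℝ)^q := by
      intro q hq
      have he2 : ∀ r ∈ Finset.range T, (49/64:ℝ)^((q*T+r)/T) = (49/64:ℝ)^q := by
        intro r hr
        rw [Finset.mem_range] at hr
        congr 1
        rw [mul_comm, Nat.mul_add_div hT]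
        simp [Nat.div_eq_of_lt hr]
      rw [Finset.sum_congr rfl he2, Finset.sum_const, Finset.card_range, nsmul_eq_mul]
    rw [Finset.sum_congr rfl hin, ← Finset.mul_sum]
    have hgs : ∑ q ∈ Finset.range t, (49/64 : ℝ)^q ≤ 64/15 := geom_le64 t
    have hTpos : (0:ℝ) < T := by exact_mod_cast hT
    calc (T:ℝ) * ∑ q ∈ Finset.range t, (49/64:ℝ)^q ≤ T * (64/15) := by
          apply mul_le_mul_of_nonneg_left hgs hTpos.le
      _ = (64/15) * T := by ring
  calc ∑ k ∈ Finset.Icc 1 (T*t), (pp T t x k - coord x k)^2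
      ≤ ∑ k ∈ Finset.Icc m (T*t), (yy T k)^2 := by rw [← step2]; exact step1
    _ ≤ (yy T m)^2 * ∑ k ∈ Finset.Icc m (T*t), (49/64:ℝ)^((k-m)/T) := step3
    _ ≤ (yy T m)^2 * ((64/15) * T) := by
        apply mul_le_mul_of_nonneg_left step4 (sq_nonneg _)
    _ = (64/15) * T * (yy T m)^2 := by ring

theorem gFun'_nonneg (T t : ℕ) (hT : 0 < T) (x : EuclideanSpace ℝ (Fin (T*t))) :
    0 ≤ gFun' T t x := by
  rw [gFun']
  have h1 : 0 ≤ ∑ k ∈ Finset.Icc 1 (T*t), (dd T t x k)^2 :=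
    Finset.sum_nonneg (fun k _ => sq_nonneg _)
  have h2 : 0 ≤ ∑ k ∈ Finset.Icc 1 (T*t), vFun (yy T k) (coord x k) :=
    Finset.sum_nonneg (fun k _ => vFun_nonneg yy_pos)
  linarith

set_option maxHeartbeats 1000000 in
theorem seq_main (T t : ℕ) (hT : 0 < T) (ht : 0 < t) (x : EuclideanSpace ℝ (Fin (T*t))) :
    2 * (1083 / (21344400 * (T:ℝ))) * gFun' T t x
      ≤ ∑ k ∈ Finset.Icc 1 (T*t), (uu T t x k)^2 := by
  classical
  have hTR : (1:ℝ) ≤ (T:ℝ) := by exact_mod_cast hT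
  have hTpos : (0:ℝ) < (T:ℝ) := by linarith
  have hG0 : 0 ≤ gFun' T t x := gFun'_nonneg T t hT x
  have hμpos : 0 < 1083 / (21344400 * (T:ℝ)) := by positivity
  -- Bound 2 : gFun' - Y ≤ ∑ uu²
  have habel := abel_lemma T t x (coord x) (coord_zero x)
  have hA : ∑ k ∈ Finset.Icc 1 (T*t), (dd T t x k - cc T (k+1) * dd T t x (k+1)) * coord x k
      = ∑ k ∈ Finset.Icc 1 (T*t), (dd T t x k)^2 := by
    rw [← habel]
    apply Finset.sum_congr rfl
    intro k hk
    rw [Finset.mem_Icc] at hk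
    rw [dd, if_pos hk.2]
    ring
  have hpoint : ∀ k ∈ Finset.Icc 1 (T*t), ((dd T t x k - cc T (k+1) * dd T t x (k+1)) + coord x k)^2/2
      - (pp T t x k - coord x k)^2 ≤ (uu T t x k)^2 := by
    intro k hk
    have he : uu T t x k = ((dd T t x k - cc T (k+1) * dd T t x (k+1)) + coord x k)
        + (pp T t x k - coord x k) := by
      rw [uu]; ring
    rw [he]
    nlinarith [sq_nonneg ((dd T t x k - cc T (k+1) * dd T t x (k+1)) + coord x k
      + 2*(pp T t x k - coord x k))]
  have hsum1 := Finset.sum_le_sum hpoint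
  rw [Finset.sum_sub_distrib] at hsum1
  have hW : ∑ k ∈ Finset.Icc 1 (T*t), ((dd T t x k - cc T (k+1) * dd T t x (k+1)) + coord x k)^2
      = ∑ k ∈ Finset.Icc 1 (T*t), (dd T t x k - cc T (k+1) * dd T t x (k+1))^2
        + 2 * ∑ k ∈ Finset.Icc 1 (T*t), (dd T t x k)^2
        + ∑ k ∈ Finset.Icc 1 (T*t), (coord x k)^2 := by
    rw [← hA]
    rw [Finset.mul_sum, ← Finset.sum_add_distrib, ← Finset.sum_add_distrib]
    apply Finset.sum_congr rfl
    intro k hk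
    ring
  have hWdiv : ∑ k ∈ Finset.Icc 1 (T*t), ((dd T t x k - cc T (k+1) * dd T t x (k+1)) + coord x k)^2/2
      = (∑ k ∈ Finset.Icc 1 (T*t), ((dd T t x k - cc T (k+1) * dd T t x (k+1)) + coord x k)^2)/2 := by
    rw [Finset.sum_div]
  have hvle : ∑ k ∈ Finset.Icc 1 (T*t), vFun (yy T k) (coord x k)
      ≤ (∑ k ∈ Finset.Icc 1 (T*t), (coord x k)^2)/2 := by
    rw [Finset.sum_div]
    apply Finset.sum_le_sum
    intro k _
    exact vFun_le yy_pos
  have haa : 0 ≤ ∑ k ∈ Finset.Icc 1 (T*t), (dd T t x k - cc T (k+1) * dd T t x (k+1))^2 :=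
    Finset.sum_nonneg (fun k _ => sq_nonneg _)
  have hAnn : 0 ≤ ∑ k ∈ Finset.Icc 1 (T*t), (dd T t x k)^2 :=
    Finset.sum_nonneg (fun k _ => sq_nonneg _)
  have core2 : gFun' T t x - ∑ k ∈ Finset.Icc 1 (T*t), (pp T t x k - coord x k)^2
      ≤ ∑ k ∈ Finset.Icc 1 (T*t), (uu T t x k)^2 := by
    rw [gFun']
    rw [hWdiv, hW] at hsum1
    linarith [hsum1, hvle, haa, hAnn]
  by_cases hY : ∑ k ∈ Finset.Icc 1 (T*t), (pp T t x k - coord x k)^2 ≤ (9/10) * gFun' T t x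
  · -- easy case
    have hc : 2 * (1083 / (21344400 * (T:ℝ))) ≤ 1/10 := by
      have he : 2 * (1083 / (21344400 * (T:ℝ))) = 2166 / (21344400 * (T:ℝ)) := by ring
      rw [he, div_le_iff₀ (by positivity)]
      nlinarith
    nlinarith [core2, hY, hG0, hμpos]
  · -- hard case
    push_neg at hY
    have hex : ∃ k, 1 ≤ k ∧ k ≤ T*t ∧
        (31/32 * yy T k < coord x k ∧ coord x k < 33/32 * yy T k) := by
      by_contra hno
      have hzero : ∑ k ∈ Finset.Icc 1 (T*t), (pp T t x k - coord x k)^2 = 0 := by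
        apply Finset.sum_eq_zero
        intro k hk
        rw [Finset.mem_Icc] at hk
        have hnt : ¬(31/32 * yy T k < coord x k ∧ coord x k < 33/32 * yy T k) :=
          fun hc => hno ⟨k, hk.1, hk.2, hc⟩
        rw [pp, vd_eq_self hnt]
        simp
      rw [hzero] at hY
      nlinarith [hY, hG0]
    set m := Nat.find hex with hm
    obtain ⟨hm1, hmn, htrap⟩ := Nat.find_spec hex
    have hmin : ∀ j, 1 ≤ j → j < m →
        ¬(31/32 * yy T j < coord x j ∧ coord x j < 33/32 * yy T j) := by
      intro j h1 h2 htr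
      exact Nat.find_min hex h2 ⟨h1, by omega, htr⟩
    have hbig : ∃ k, 1 ≤ k ∧ k ≤ T*t ∧ yy T m / 40 < |uu T t x k| := by
      by_contra hno2
      push_neg at hno2
      exact bound1 T t hT ht x m hm1 hmn htrap hmin hno2
    obtain ⟨k, hk1, hkn, hk⟩ := hbig
    have hsq : (yy T m / 40)^2 ≤ (uu T t x k)^2 := by
      have h1 : (yy T m / 40)^2 ≤ |uu T t x k|^2 :=
        pow_le_pow_left₀ (div_nonneg yy_pos.le (by norm_num)) hk.le 2
      rwa [sq_abs] at h1
    have hle : (uu T t x k)^2 ≤ ∑ j ∈ Finset.Icc 1 (T*t), (uu T t x j)^2 :=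
      Finset.single_le_sum (f := fun j => (uu T t x j)^2) (fun j _ => sq_nonneg _) (Finset.mem_Icc.mpr ⟨hk1, hkn⟩)
    have hYb := Ybound T t hT ht x m hm1 hmn hmin
    have hGb : gFun' T t x ≤ (10/9) * ∑ j ∈ Finset.Icc 1 (T*t), (pp T t x j - coord x j)^2 := by
      linarith [hY]
    have hchain : 2 * (1083 / (21344400 * (T:ℝ))) * gFun' T t x
        ≤ 2 * (1083 / (21344400 * (T:ℝ))) * ((10/9) * ((64/15) * T * (yy T m)^2)) := by
      apply mul_le_mul_of_nonneg_left _ (by positivity)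
      calc gFun' T t x ≤ (10/9) * ∑ j ∈ Finset.Icc 1 (T*t), (pp T t x j - coord x j)^2 := hGb
        _ ≤ (10/9) * ((64/15) * T * (yy T m)^2) := by linarith [hYb]
    have hfinal : 2 * (1083 / (21344400 * (T:ℝ))) * ((10/9) * ((64/15) * T * (yy T m)^2))
        ≤ (yy T m / 40)^2 := by
      have h1 : 2 * (1083 / (21344400 * (T:ℝ))) * ((10/9) * ((64/15) * (T:ℝ) * (yy T m)^2))
          = (1386240/2881494000) * (yy T m)^2 := by
        field_simp [hTpos.ne']
        ring
      rw [h1, div_pow]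
      nlinarith [sq_nonneg (yy T m)]
    linarith [hchain, hfinal, hsq, hle]

/-- For all positive `T, t`, `g_{T,t}` satisfies the `(1/(C₃T))`-PL
condition with `C₃ = 21344400/1083`. -/
theorem gFun_PL (T t : ℕ) (hT : 0 < T) (ht : 0 < t)
    (x : EuclideanSpace ℝ (Fin (T * t))) :
    ‖gradient (gFun T t) x‖ ^ 2 ≥
      2 * (1083 / (21344400 * (T : ℝ))) *
        (gFun T t x - ⨅ z : EuclideanSpace ℝ (Fin (T * t)), gFun T t z) := by
  rw [gFun_inf T t hT, sub_zero, ge_iff_le, grad_norm_sq T t hT x]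
  have h1 := seq_main T t hT ht x
  have h2 : gFun T t x = gFun' T t x := by
    rw [gFun_seq T t hT x, gFun']
  rw [h2]
  exact h1
end

section
/- Fix positive integers T, t and x ∈ ℝ^{Tt}. For every k ∈ {1, …, Tt}: if z̃_k ∉ [31/32, 33/32] and Dominate(k) does not hold, then |z̃_{k−1}| ≥ (4/3)|z̃_k| or |z̃_{k+1}| ≥ (4/3)|z̃_k|. -/
/-- Extended coordinates: `x̃_0 = 0`, `x̃_i = x_i` for `1 ≤ i ≤ Tt`, `x̃_{Tt+1} = x_{Tt}`. -/
noncomputable def xTilde (T t : ℕ) (x : EuclideanSpace ℝ (Fin (T * t))) (k : ℕ) : ℝ :=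
  if k ≤ T * t then coord x k else coord x (T * t)

/-- Extended reference coordinates: `ỹ_0 = 1`, `ỹ_i = y_i` for `1 ≤ i ≤ Tt`,
`ỹ_{Tt+1} = y_{Tt}`. -/
noncomputable def yTilde (T t : ℕ) (k : ℕ) : ℝ :=
  if k = 0 then 1
  else if k ≤ T * t then coord (yVec T t) k
  else coord (yVec T t) (T * t)

/-- The ratios `z̃_k = x̃_k / ỹ_k`. -/
noncomputable def zTilde (T t : ℕ) (x : EuclideanSpace ℝ (Fin (T * t))) (k : ℕ) : ℝ :=
  xTilde T t x k / yTilde T t k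

/-- `Dominate k` holds iff `x_k = 0` or `|(∇g_{T,t}(x))_k| > 0.19·|x_k|`. -/
def Dominate (T t : ℕ) (x : EuclideanSpace ℝ (Fin (T * t))) (k : ℕ) : Prop :=
  coord x k = 0 ∨ |coord (gradient (gFun T t) x) k| > 0.19 * |coord x k|


noncomputable def vD (y x : ℝ) : ℝ :=
  if x ≤ 31 / 32 * y then x
  else if x ≤ y then x - 32 * (x - 31 / 32 * y)
  else if x ≤ 33 / 32 * y then x + 32 * (x - 33 / 32 * y)
  else x

lemma glue_at {f g F : ℝ → ℝ} {c D : ℝ} (hf : HasDerivAt f D c) (hg : HasDerivAt g D c)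
    (h1 : F =ᶠ[nhdsWithin c (Set.Iic c)] f) (h2 : F =ᶠ[nhdsWithin c (Set.Ici c)] g) :
    HasDerivAt F D c := by
  have hFc : F c = f c := h1.self_of_nhdsWithin (Set.mem_Iic.2 le_rfl)
  have hGc : F c = g c := h2.self_of_nhdsWithin (Set.mem_Ici.2 le_rfl)
  have A : HasDerivWithinAt F D (Set.Iic c) c :=
    (hf.hasDerivWithinAt).congr_of_eventuallyEq h1 hFc
  have B : HasDerivWithinAt F D (Set.Ici c) c :=
    (hg.hasDerivWithinAt).congr_of_eventuallyEq h2 hGc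
  have := A.union B
  rw [Set.Iic_union_Ici] at this
  exact this.hasDerivAt (by simp)

lemma hasDerivAt_poly1 (c : ℝ) : HasDerivAt (fun x : ℝ => x ^ 2 / 2) c c := by
  simpa using ((hasDerivAt_pow 2 c).div_const 2)

lemma hasDerivAt_poly2 (y c : ℝ) :
    HasDerivAt (fun x : ℝ => x ^ 2 / 2 - 16 * (x - 31 / 32 * y) ^ 2)
      (c - 32 * (c - 31 / 32 * y)) c := by
  have h2 : HasDerivAt (fun x : ℝ => x - 31 / 32 * y) 1 c := (hasDerivAt_id c).sub_const _
  have h3 : HasDerivAt (fun x : ℝ => (x - 31 / 32 * y) ^ 2) (2 * (c - 31/32*y) ^ 1 * 1) c :=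
    (hasDerivAt_pow 2 _).comp c h2
  have := (hasDerivAt_poly1 c).sub (h3.const_mul (16 : ℝ))
  exact this.congr_deriv (by ring)

lemma hasDerivAt_poly3 (y c : ℝ) :
    HasDerivAt (fun x : ℝ => x ^ 2 / 2 - y ^ 2 / 32 + 16 * (x - 33 / 32 * y) ^ 2)
      (c + 32 * (c - 33 / 32 * y)) c := by
  have h2 : HasDerivAt (fun x : ℝ => x - 33 / 32 * y) 1 c := (hasDerivAt_id c).sub_const _
  have h3 : HasDerivAt (fun x : ℝ => (x - 33 / 32 * y) ^ 2) (2 * (c - 33/32*y) ^ 1 * 1) c :=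
    (hasDerivAt_pow 2 _).comp c h2
  have := ((hasDerivAt_poly1 c).sub_const (y^2/32)).add (h3.const_mul (16 : ℝ))
  exact this.congr_deriv (by ring)

lemma hasDerivAt_vFun (y : ℝ) (hy : 0 < y) (c : ℝ) : HasDerivAt (vFun y) (vD y c) c := by
  have hab : 31 / 32 * y < y := by nlinarith
  have hbc : y < 33 / 32 * y := by nlinarith
  rcases lt_trichotomy c (31/32*y) with h1 | h1 | h1
  · rw [show vD y c = c from by rw [vD, if_pos h1.le]]
    apply (hasDerivAt_poly1 c).congr_of_eventuallyEq
    filter_upwards [Iio_mem_nhds h1] with z hz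
    rw [vFun, if_pos (le_of_lt hz)]
  · -- c = 31/32 y
    rw [show vD y c = c from by rw [vD, if_pos h1.le]]
    refine glue_at (g := fun x => x^2/2 - 16*(x - 31/32*y)^2) (hasDerivAt_poly1 _) ?_ ?_ ?_
    · convert hasDerivAt_poly2 y c using 1; rw [h1]; ring
    · filter_upwards [self_mem_nhdsWithin] with z hz
      rw [vFun, if_pos (h1 ▸ Set.mem_Iic.1 hz)]
    · filter_upwards [mem_nhdsWithin_of_mem_nhds (Iio_mem_nhds (h1 ▸ hab)),
        self_mem_nhdsWithin] with z hz1 hz2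
      rcases eq_or_lt_of_le (Set.mem_Ici.1 hz2) with h | h
      · rw [vFun, if_pos (h1 ▸ h.symm.le : z ≤ 31/32*y)]
        rw [← h, h1]; ring_nf
      · rw [vFun, if_neg (not_le.2 (h1 ▸ h)), if_pos (le_of_lt hz1)]
  · rcases lt_trichotomy c y with h2 | h2 | h2
    · rw [show vD y c = c - 32*(c - 31/32*y) from by rw [vD, if_neg (not_le.2 h1), if_pos h2.le]]
      apply (hasDerivAt_poly2 y c).congr_of_eventuallyEq
      filter_upwards [Ioo_mem_nhds h1 h2] with z hz
      rw [vFun, if_neg (not_le.2 hz.1), if_pos hz.2.le]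
    · -- c = y
      rw [show vD y c = c - 32*(c - 31/32*y) from by
        rw [vD, if_neg (not_le.2 h1), if_pos h2.le]]
      refine glue_at (f := fun x => x^2/2 - 16*(x - 31/32*y)^2)
        (g := fun x => x^2/2 - y^2/32 + 16*(x - 33/32*y)^2) (hasDerivAt_poly2 y c) ?_ ?_ ?_
      · convert hasDerivAt_poly3 y c using 1; rw [h2]; ring
      · filter_upwards [mem_nhdsWithin_of_mem_nhds (Ioi_mem_nhds h1),
          self_mem_nhdsWithin] with z hz1 hz2
        rw [vFun, if_neg (not_le.2 hz1), if_pos (h2 ▸ Set.mem_Iic.1 hz2)]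
      · filter_upwards [mem_nhdsWithin_of_mem_nhds (Iio_mem_nhds (lt_of_le_of_lt h2.le hbc)),
          mem_nhdsWithin_of_mem_nhds (Ioi_mem_nhds h1),
          self_mem_nhdsWithin] with z hz1 hz0 hz2
        rcases eq_or_lt_of_le (Set.mem_Ici.1 hz2) with h | h
        · rw [vFun, if_neg (not_le.2 hz0), if_pos (h2 ▸ h.symm.le : z ≤ y), ← h, h2]; ring_nf
        · rw [vFun, if_neg (not_le.2 hz0), if_neg (not_le.2 (h2 ▸ h)), if_pos (le_of_lt hz1)]
    · rcases lt_trichotomy c (33/32*y) with h3 | h3 | h3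
      · rw [show vD y c = c + 32*(c - 33/32*y) from by
          rw [vD, if_neg (not_le.2 h1), if_neg (not_le.2 h2), if_pos h3.le]]
        apply (hasDerivAt_poly3 y c).congr_of_eventuallyEq
        filter_upwards [Ioo_mem_nhds h2 h3] with z hz
        rw [vFun, if_neg (not_le.2 (hz.1.trans' hab)), if_neg (not_le.2 hz.1), if_pos hz.2.le]
      · -- c = 33/32 y
        rw [show vD y c = c + 32*(c - 33/32*y) from by
          rw [vD, if_neg (not_le.2 h1), if_neg (not_le.2 h2), if_pos h3.le]]
        refine glue_at (f := fun x => x^2/2 - y^2/32 + 16*(x - 33/32*y)^2)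
          (g := fun x => x^2/2 - y^2/32) (hasDerivAt_poly3 y c) ?_ ?_ ?_
        · exact ((hasDerivAt_poly1 c).sub_const (y^2/32)).congr_deriv (by rw [h3]; ring)
        · filter_upwards [mem_nhdsWithin_of_mem_nhds (Ioi_mem_nhds h2),
            self_mem_nhdsWithin] with z hz1 hz2
          rw [vFun, if_neg (not_le.2 (hz1.trans' hab)), if_neg (not_le.2 hz1),
            if_pos (h3 ▸ Set.mem_Iic.1 hz2)]
        · filter_upwards [mem_nhdsWithin_of_mem_nhds (Ioi_mem_nhds h2),
            self_mem_nhdsWithin] with z hz1 hz2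
          rcases eq_or_lt_of_le (Set.mem_Ici.1 hz2) with h | h
          · rw [vFun, if_neg (not_le.2 (hz1.trans' hab)), if_neg (not_le.2 hz1),
              if_pos (h3 ▸ h.symm.le : z ≤ 33/32*y), ← h, h3]
            ring_nf
          · rw [vFun, if_neg (not_le.2 (hz1.trans' hab)), if_neg (not_le.2 hz1),
              if_neg (not_le.2 (h3 ▸ h))]
      · rw [show vD y c = c from by
          rw [vD, if_neg (not_le.2 h1), if_neg (not_le.2 h2), if_neg (not_le.2 h3)]]
        apply ((hasDerivAt_poly1 c).sub_const (y^2/32)).congr_of_eventuallyEq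
        filter_upwards [Ioi_mem_nhds h3] with z hz
        rw [vFun, if_neg (not_le.2 (hz.trans' (hab.trans hbc))),
          if_neg (not_le.2 (hz.trans' hbc)), if_neg (not_le.2 hz)]


/-- coefficient `a_{n+1}` multiplying `x_n` in the chain term `x_{n+1} - a_{n+1} x_n`. -/
noncomputable def aC (T n : ℕ) : ℝ := if T ∣ n then 7 / 8 else 1

lemma aC_pos (T n : ℕ) : 0 < aC T n := by rw [aC]; split <;> norm_num

lemma aC_le_one (T n : ℕ) : aC T n ≤ 1 := by rw [aC]; split <;> norm_num

lemma block_sum_s15 (f : ℕ → ℝ) (T t : ℕ) :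
    ∑ n ∈ Finset.range (T * t), f n = ∑ i ∈ Finset.range t, ∑ j ∈ Finset.range T, f (i * T + j) := by
  induction t with
  | zero => simp
  | succ t ih =>
    rw [Finset.sum_range_succ, ← ih, Nat.mul_succ, Finset.sum_range_add]
    congr 1
    · apply Finset.sum_congr rfl; intro j _; rw [Nat.mul_comm]

lemma not_dvd_mul_add (T i r : ℕ) (h1 : 0 < r) (h2 : r < T) : ¬ T ∣ (i * T + r) := by
  intro h
  have : T ∣ r := (Nat.dvd_add_right (Dvd.intro_left i rfl)).1 h
  exact absurd (Nat.le_of_dvd h1 this) (not_le.2 h2)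

lemma qFun_chain (T t : ℕ) (hT : 0 < T) (x : EuclideanSpace ℝ (Fin (T * t))) :
    qFun T t x = (1 / 2) * ∑ n ∈ Finset.range (T * t),
      (coord x (n + 1) - aC T n * coord x n) ^ 2 := by
  rw [qFun, block_sum_s15]
  congr 1
  apply Finset.sum_congr rfl
  intro i _
  have hT1 : Finset.range T = Finset.range ((T - 1) + 1) := by congr 1; omega
  rw [hT1, Finset.sum_range_succ']
  have h0 : (coord x (i * T + 0 + 1) - aC T (i * T + 0) * coord x (i * T + 0)) ^ 2
      = (7 / 8 * coord x (i * T) - coord x (i * T + 1)) ^ 2 := by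
    have : aC T (i * T + 0) = 7 / 8 := by rw [aC, if_pos]; exact Dvd.intro_left i rfl
    rw [this]; ring_nf
  have h1 : Finset.Icc 1 (T - 1) = Finset.Ico 1 T := by
    rw [← Finset.Ico_add_one_right_eq_Icc]; congr 1; omega
  rw [h0, h1, Finset.sum_Ico_eq_sum_range]
  rw [add_comm ((7 / 8 * coord x (i * T) - coord x (i * T + 1)) ^ 2)]
  congr 1
  apply Finset.sum_congr (by congr 1) ?_
  intro j hj
  rw [Finset.mem_range] at hj
  have haC : aC T (i * T + (j + 1)) = 1 := by
    rw [aC, if_neg (not_dvd_mul_add T i (j + 1) (by omega) (by omega))]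
  rw [haC, one_mul]
  have e1 : i * T + (j + 1) + 1 = i * T + (1 + j) + 1 := by omega
  have e2 : i * T + (j + 1) = i * T + (1 + j) := by omega
  rw [e1, e2]

/-- coordinate continuous linear map, 1-indexed with out-of-range = 0 -/
noncomputable def coordL (d : ℕ) (j : ℕ) : EuclideanSpace ℝ (Fin d) →L[ℝ] ℝ :=
  if h : 1 ≤ j ∧ j ≤ d then EuclideanSpace.proj (⟨j - 1, by omega⟩ : Fin d) else 0

lemma coordL_apply (d j : ℕ) (x : EuclideanSpace ℝ (Fin d)) : coordL d j x = coord x j := by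
  rw [coordL, coord]
  split
  · rfl
  · rfl

lemma coordL_single (d j : ℕ) (m : Fin d) :
    coordL d j (EuclideanSpace.single m 1) = if j = m.1 + 1 then 1 else 0 := by
  rw [coordL]
  split
  · rename_i h
    rw [show (EuclideanSpace.proj (⟨j-1, by omega⟩ : Fin d)) (EuclideanSpace.single m 1) = EuclideanSpace.single m (1:ℝ) ⟨j-1, by omega⟩ from rfl, EuclideanSpace.single_apply]
    congr 1
    rw [Fin.ext_iff]
    simp only [eq_iff_iff]
    omega
  · rename_i h
    rw [if_neg (by intro he; exact h ⟨by omega, by omega⟩)]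
    simp

/-- the chain-difference linear functional `x ↦ x_{n+1} - a_{n+1} x_n` -/
noncomputable def sL (d n : ℕ) (T : ℕ) : EuclideanSpace ℝ (Fin d) →L[ℝ] ℝ :=
  coordL d (n + 1) - aC T n • coordL d n

lemma sL_apply (d n T : ℕ) (x : EuclideanSpace ℝ (Fin d)) :
    sL d n T x = coord x (n + 1) - aC T n * coord x n := by
  simp [sL, coordL_apply]

lemma hasFDerivAt_qFun (T t : ℕ) (hT : 0 < T) (x : EuclideanSpace ℝ (Fin (T * t))) :
    HasFDerivAt (qFun T t)
      (∑ n ∈ Finset.range (T * t), sL (T * t) n T x • (sL (T * t) n T)) x := by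
  have hq : qFun T t = fun x => (1 / 2) * ∑ n ∈ Finset.range (T * t), (sL (T * t) n T x) ^ 2 := by
    funext z
    rw [qFun_chain T t hT]
    simp [sL_apply]
  rw [hq]
  have h1 : ∀ n ∈ Finset.range (T * t),
      HasFDerivAt (fun x : EuclideanSpace ℝ (Fin (T * t)) => (sL (T * t) n T x) ^ 2)
        ((2 * sL (T * t) n T x) • (sL (T * t) n T)) x := by
    intro n _
    have h := ((sL (T * t) n T).hasFDerivAt (x := x)).mul ((sL (T * t) n T).hasFDerivAt (x := x))
    have : (fun x : EuclideanSpace ℝ (Fin (T * t)) => (sL (T * t) n T x) ^ 2)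
        = fun x => sL (T * t) n T x * sL (T * t) n T x := by funext z; ring
    rw [this]
    exact h.congr_fderiv (by rw [two_mul, add_smul])
  have h2 := (HasFDerivAt.fun_sum h1).const_mul (1 / 2 : ℝ)
  refine h2.congr_fderiv ?_
  rw [Finset.smul_sum]
  apply Finset.sum_congr rfl
  intro n _
  rw [smul_smul]
  congr 1
  ring

lemma hasFDerivAt_vsum (T t : ℕ) (x : EuclideanSpace ℝ (Fin (T * t))) :
    HasFDerivAt (fun x : EuclideanSpace ℝ (Fin (T * t)) => ∑ i : Fin (T * t), vFun (yVec T t i) (x i))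
      (∑ i : Fin (T * t), vD (yVec T t i) (x i) • (EuclideanSpace.proj i : EuclideanSpace ℝ (Fin (T * t)) →L[ℝ] ℝ)) x := by
  apply HasFDerivAt.fun_sum
  intro i _
  have hy : (0 : ℝ) < yVec T t i := pow_pos (by norm_num) _
  have hp := (EuclideanSpace.proj (𝕜 := ℝ) i).hasFDerivAt (x := x)
  exact (hasDerivAt_vFun _ hy (x i)).comp_hasFDerivAt x hp

lemma coord_gradient_eq {d : ℕ} (f : EuclideanSpace ℝ (Fin d) → ℝ)
    (x : EuclideanSpace ℝ (Fin d)) {L : EuclideanSpace ℝ (Fin d) →L[ℝ] ℝ}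
    (hf : HasFDerivAt f L x) (m : Fin d) :
    coord (gradient f x) (m.1 + 1) = L (EuclideanSpace.single m 1) := by
  have h1 : coord (gradient f x) (m.1 + 1) = gradient f x m := by
    rw [coord, dif_pos ⟨by omega, by omega⟩]
    have he : (⟨m.1 + 1 - 1, by omega⟩ : Fin d) = m := Fin.ext (by simp)
    rw [he]
  rw [h1]
  have h2 : gradient f x m
      = @inner ℝ _ _ (gradient f x) (EuclideanSpace.single m (1 : ℝ)) := by
    rw [EuclideanSpace.inner_single_right]
    simp
  rw [h2, gradient, InnerProductSpace.toDual_symm_apply, hf.fderiv]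

lemma coord_gradient_gFun (T t : ℕ) (hT : 0 < T) (x : EuclideanSpace ℝ (Fin (T * t)))
    (m : Fin (T * t)) :
    coord (gradient (gFun T t) x) (m.1 + 1)
      = (coord x (m.1 + 1) - aC T m.1 * coord x m.1)
        - (if m.1 + 1 < T * t then
            aC T (m.1 + 1) * (coord x (m.1 + 1 + 1) - aC T (m.1 + 1) * coord x (m.1 + 1)) else 0)
        + vD ((7 / 8 : ℝ) ^ (m.1 / T)) (x m) := by
  have hg : HasFDerivAt (gFun T t)
      ((∑ n ∈ Finset.range (T * t), sL (T * t) n T x • (sL (T * t) n T))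
        + (∑ i : Fin (T * t), vD (yVec T t i) (x i) • (EuclideanSpace.proj i : EuclideanSpace ℝ (Fin (T * t)) →L[ℝ] ℝ))) x :=
    (hasFDerivAt_qFun T t hT x).add (hasFDerivAt_vsum T t x)
  rw [coord_gradient_eq _ _ hg m]
  rw [ContinuousLinearMap.add_apply, ContinuousLinearMap.sum_apply, ContinuousLinearMap.sum_apply]
  congr 1
  · -- q part
    have key : ∀ n ∈ Finset.range (T * t),
        (sL (T * t) n T x • (sL (T * t) n T)) (EuclideanSpace.single m 1)
          = (if n = m.1 then sL (T * t) n T x else 0)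
            - (if n = m.1 + 1 then aC T n * sL (T * t) n T x else 0) := by
      intro n _
      rw [ContinuousLinearMap.smul_apply, smul_eq_mul]
      rw [show (sL (T * t) n T) (EuclideanSpace.single m 1)
          = coordL (T * t) (n + 1) (EuclideanSpace.single m 1)
            - aC T n * coordL (T * t) n (EuclideanSpace.single m 1) from by simp [sL]]
      rw [coordL_single, coordL_single]
      by_cases h1 : n = m.1 <;> by_cases h2 : n = m.1 + 1
      · omega
      · rw [if_pos (by omega : n + 1 = m.1 + 1), if_pos h1, if_neg h2, if_neg h2]; ring
      · rw [if_neg (by omega : ¬(n + 1 = m.1 + 1)), if_neg h1, if_pos h2, if_pos h2]; ring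
      · rw [if_neg (by omega : ¬(n + 1 = m.1 + 1)), if_neg h1, if_neg h2, if_neg h2]; ring
    rw [Finset.sum_congr rfl key, Finset.sum_sub_distrib,
      Finset.sum_ite_eq' (Finset.range (T * t)) m.1 (fun n => sL (T * t) n T x),
      Finset.sum_ite_eq' (Finset.range (T * t)) (m.1 + 1) (fun n => aC T n * sL (T * t) n T x)]
    rw [if_pos (Finset.mem_range.2 m.2)]
    rw [sL_apply]
    congr 1
    by_cases h : m.1 + 1 < T * t
    · rw [if_pos (Finset.mem_range.2 h), if_pos h, sL_apply]
    · rw [if_neg (fun hc => h (Finset.mem_range.1 hc)), if_neg h]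
  · -- v part
    have key : ∀ i ∈ (Finset.univ : Finset (Fin (T * t))),
        (vD (yVec T t i) (x i) • (EuclideanSpace.proj i : EuclideanSpace ℝ (Fin (T * t)) →L[ℝ] ℝ))
            (EuclideanSpace.single m 1)
          = if i = m then vD (yVec T t i) (x i) else 0 := by
      intro i _
      rw [ContinuousLinearMap.smul_apply, smul_eq_mul,
        show (EuclideanSpace.proj i) (EuclideanSpace.single m 1)
          = EuclideanSpace.single m (1 : ℝ) i from rfl,
        EuclideanSpace.single_apply]
      split <;> simp
    rw [Finset.sum_congr rfl key, Finset.sum_ite_eq' Finset.univ m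
      (fun i => vD (yVec T t i) (x i)), if_pos (Finset.mem_univ m)]
    rfl


lemma coord_yVec (T t j : ℕ) (h1 : 1 ≤ j) (h2 : j ≤ T * t) :
    coord (yVec T t) j = (7 / 8 : ℝ) ^ ((j - 1) / T) := by
  rw [coord, dif_pos ⟨h1, h2⟩]; rfl

lemma yTilde_eq (T t j : ℕ) (h1 : 1 ≤ j) (h2 : j ≤ T * t) :
    yTilde T t j = (7 / 8 : ℝ) ^ ((j - 1) / T) := by
  rw [yTilde, if_neg (by omega), if_pos h2, coord_yVec T t j h1 h2]

lemma zTilde_eq (T t : ℕ) (x : EuclideanSpace ℝ (Fin (T * t))) (j : ℕ)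
    (h1 : 1 ≤ j) (h2 : j ≤ T * t) :
    zTilde T t x j = coord x j / (7 / 8 : ℝ) ^ ((j - 1) / T) := by
  rw [zTilde, xTilde, if_pos h2, yTilde_eq T t j h1 h2]

lemma coord_eq_zTilde_mul (T t : ℕ) (x : EuclideanSpace ℝ (Fin (T * t))) (j : ℕ)
    (h1 : 1 ≤ j) (h2 : j ≤ T * t) :
    coord x j = zTilde T t x j * (7 / 8 : ℝ) ^ ((j - 1) / T) := by
  rw [zTilde_eq T t x j h1 h2, div_mul_cancel₀]
  positivity

lemma zTilde_zero (T t : ℕ) (x : EuclideanSpace ℝ (Fin (T * t))) :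
    zTilde T t x 0 = 0 := by
  rw [zTilde, xTilde, if_pos (Nat.zero_le _), coord, dif_neg (by omega), zero_div]

lemma pow_div_succ (T : ℕ) (hT : 0 < T) (n : ℕ) (hn : 1 ≤ n) :
    (7 / 8 : ℝ) ^ (n / T) = aC T n * (7 / 8 : ℝ) ^ ((n - 1) / T) := by
  have h : n / T = (n - 1) / T + if T ∣ n then 1 else 0 := by
    conv_lhs => rw [show n = (n - 1) + 1 by omega]
    rw [Nat.succ_div, show n - 1 + 1 = n by omega]
  rw [h, pow_add, aC]
  split
  · rw [pow_one]; ring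
  · rw [pow_zero]; ring

set_option maxHeartbeats 2000000 in
/-- For `k ∈ {1, …, Tt}`: if `z̃_k ∉ [31/32, 33/32]` and `Dominate k`
fails, then `|z̃_{k-1}| ≥ (4/3)|z̃_k|` or `|z̃_{k+1}| ≥ (4/3)|z̃_k|`. -/
theorem not_dominate_neighbor_growth (T t : ℕ) (hT : 0 < T) (ht : 0 < t)
    (x : EuclideanSpace ℝ (Fin (T * t))) (k : ℕ) (hk1 : 1 ≤ k) (hk2 : k ≤ T * t)
    (hz : zTilde T t x k ∉ Set.Icc (31 / 32 : ℝ) (33 / 32))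
    (hnd : ¬ Dominate T t x k) :
    |zTilde T t x (k - 1)| ≥ 4 / 3 * |zTilde T t x k| ∨
    |zTilde T t x (k + 1)| ≥ 4 / 3 * |zTilde T t x k| := by
  by_contra hcon
  push_neg at hcon
  simp only [Dominate] at hnd
  push_neg at hnd
  obtain ⟨hx0, hgrad⟩ := hnd
  have hd : 0 < T * t := Nat.mul_pos hT ht
  set zk := zTilde T t x k with hzkdef
  set zp := zTilde T t x (k - 1) with hzpdef
  set zs := zTilde T t x (k + 1) with hzsdef
  obtain ⟨hL, hR⟩ := hcon
  set m : Fin (T * t) := ⟨k - 1, by omega⟩ with hm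
  have hm1 : (m : ℕ) = k - 1 := rfl
  have hmk : (m : ℕ) + 1 = k := by rw [hm1]; omega
  have hG := coord_gradient_gFun T t hT x m
  rw [hmk] at hG
  set Yk : ℝ := (7 / 8 : ℝ) ^ ((k - 1) / T) with hYkdef
  have hYkpos : 0 < Yk := by positivity
  have hxk : coord x k = zk * Yk := coord_eq_zTilde_mul T t x k hk1 hk2
  -- the vD term
  have hxm : x m = coord x k := by rw [coord, dif_pos ⟨hk1, hk2⟩]
  have hvD : vD ((7 / 8 : ℝ) ^ ((m : ℕ) / T)) (x m) = coord x k := by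
    rw [show (7 / 8 : ℝ) ^ ((m : ℕ) / T) = Yk from rfl, hxm]
    rw [Set.mem_Icc] at hz
    push_neg at hz
    rcases lt_or_ge zk (31 / 32) with h | h
    · have hlt : coord x k < 31 / 32 * Yk := by rw [hxk]; nlinarith
      rw [vD, if_pos hlt.le]
    · have h33 := hz h
      have hgt : 33 / 32 * Yk < coord x k := by rw [hxk]; nlinarith
      rw [vD, if_neg (by nlinarith), if_neg (by nlinarith), if_neg (by nlinarith)]
  -- the predecessor term
  have hprev : ∃ c : ℝ, 0 < c ∧ c ≤ 1 ∧
      aC T (m : ℕ) * coord x (m : ℕ) = c * zp * Yk := by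
    rcases Nat.lt_or_ge k 2 with h1 | h1
    · refine ⟨1, one_pos, le_rfl, ?_⟩
      have hc0 : coord x ((m : ℕ)) = 0 := by
        rw [coord, dif_neg (by omega)]
      rw [hc0, hzpdef, show k - 1 = 0 by omega, zTilde_zero]
      ring
    · refine ⟨1, one_pos, le_rfl, ?_⟩
      have hcc : coord x (k - 1) = zp * (7 / 8 : ℝ) ^ ((k - 1 - 1) / T) :=
        coord_eq_zTilde_mul T t x (k - 1) (by omega) (by omega)
      have hYrel : Yk = aC T (k - 1) * (7 / 8 : ℝ) ^ ((k - 1 - 1) / T) := by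
        rw [hYkdef]; exact pow_div_succ T hT (k - 1) (by omega)
      rw [hm1, hcc, hYrel]
      ring
  -- the successor term
  have hsucc : ∃ A : ℝ, 0 ≤ A ∧ A ≤ 1 ∧
      (if k < T * t then
          aC T k * (coord x (k + 1) - aC T k * coord x k) else 0)
        = A * zs * Yk - A * zk * Yk := by
    by_cases h : k < T * t
    · refine ⟨(aC T k) ^ 2, sq_nonneg _, ?_, ?_⟩
      · have h1 := aC_le_one T k
        have h2 := aC_pos T k
        nlinarith
      · rw [if_pos h]
        have hxk1 : coord x (k + 1) = zs * (7 / 8 : ℝ) ^ ((k + 1 - 1) / T) :=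
          coord_eq_zTilde_mul T t x (k + 1) (by omega) (by omega)
        have hYrel : (7 / 8 : ℝ) ^ ((k + 1 - 1) / T) = aC T k * Yk := by
          rw [show k + 1 - 1 = k by omega, pow_div_succ T hT k hk1, hYkdef]
        rw [hxk1, hYrel, hxk]
        ring
    · exact ⟨0, le_rfl, zero_le_one, by rw [if_neg h]; ring⟩
  obtain ⟨c, hc0, hc1, hprev⟩ := hprev
  obtain ⟨A, hA0, hA1, hsucc⟩ := hsucc
  rw [hprev, hsucc, hvD, hxk] at hG
  rw [hG, hxk] at hgrad
  set W : ℝ := (2 + A) * zk - c * zp - A * zs with hW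
  have hEW : zk * Yk - c * zp * Yk - (A * zs * Yk - A * zk * Yk) + zk * Yk = Yk * W := by
    rw [hW]; ring
  rw [hEW] at hgrad
  have hWle : |W| ≤ 0.19 * |zk| := by
    rw [abs_mul, abs_of_pos hYkpos, abs_mul, abs_of_pos hYkpos] at hgrad
    have h2 : |W| * Yk ≤ (0.19 * |zk|) * Yk := by nlinarith [hgrad]
    exact le_of_mul_le_mul_right h2 hYkpos
  have hzk0 : zk ≠ 0 := by
    intro h
    rw [hxk, h, zero_mul] at hx0
    exact hx0 rfl
  have hP : 0 < |zk| := abs_pos.2 hzk0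
  have habs : (2 + A) * |zk| ≤ |W| + c * |zp| + A * |zs| := by
    have h1 : (2 + A) * zk = W + c * zp + A * zs := by rw [hW]; ring
    calc (2 + A) * |zk| = |(2 + A) * zk| := by
          rw [abs_mul, abs_of_pos (by linarith : (0:ℝ) < 2 + A)]
    _ = |W + c * zp + A * zs| := by rw [h1]
    _ ≤ |W + c * zp| + |A * zs| := abs_add_le _ _
    _ ≤ |W| + |c * zp| + |A * zs| := by linarith [abs_add_le W (c * zp)]
    _ = |W| + c * |zp| + A * |zs| := by
          rw [abs_mul, abs_mul, abs_of_pos hc0, abs_of_nonneg hA0]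
  have e1 : c * |zp| ≤ c * (4 / 3 * |zk|) := mul_le_mul_of_nonneg_left hL.le hc0.le
  have e2 : A * |zs| ≤ A * (4 / 3 * |zk|) := mul_le_mul_of_nonneg_left hR.le hA0
  nlinarith [habs, hWle, e1, e2, hA1, hc1, hP, hA0, hc0.le]
end
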